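/- Let G be a graph and S ⊆ V(G). If S is not t-convex, then either there is a vertex v ∉ S with at least two neighbours in S, or there exist a connected component C of G − S and non-adjacent u, v ∈ S each having a neighbour in C; in the latter case, any shortest u–v path in the induced subgraph G[V(C) ∪ {u, v}] is an induced path of G all of whose internal vertices lie outside S. -/

import Mathlib

open Set

variable {V : Type*}

/-- `p` is a triangle path: a path with no edge joining vertices at index
distance greater than 2 along the path. -/
def TPath (G : SimpleGraph V) {u v : V} (p : G.Walk u v) : Prop :=
  p.IsPath ∧ ∀ i j : ℕ, i + 2 < j →
    ∀ (hi : i < p.support.length) (hj : j < p.support.length),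
      ¬ G.Adj (p.support.get ⟨i, hi⟩) (p.support.get ⟨j, hj⟩)

/-- `p` is a monophonic (induced) path: a path with no edge joining vertices at
index distance greater than 1 along the path. -/
def MPath (G : SimpleGraph V) {u v : V} (p : G.Walk u v) : Prop :=
  p.IsPath ∧ ∀ i j : ℕ, i + 1 < j →
    ∀ (hi : i < p.support.length) (hj : j < p.support.length),
      ¬ G.Adj (p.support.get ⟨i, hi⟩) (p.support.get ⟨j, hj⟩)

/-- `p` is a geodesic (shortest path). -/
def GPath (G : SimpleGraph V) {u v : V} (p : G.Walk u v) : Prop :=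
  p.IsPath ∧ ∀ q : G.Walk u v, p.length ≤ q.length

/-- `S` is convex in the triangle path convexity. -/
def TConvex (G : SimpleGraph V) (S : Set V) : Prop :=
  ∀ ⦃u v : V⦄, u ∈ S → v ∈ S → ∀ p : G.Walk u v, TPath G p → ∀ w ∈ p.support, w ∈ S

/-- `S` is convex in the monophonic convexity. -/
def MConvex (G : SimpleGraph V) (S : Set V) : Prop :=
  ∀ ⦃u v : V⦄, u ∈ S → v ∈ S → ∀ p : G.Walk u v, MPath G p → ∀ w ∈ p.support, w ∈ S

/-- `S` is convex in the geodetic convexity. -/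
def GConvex (G : SimpleGraph V) (S : Set V) : Prop :=
  ∀ ⦃u v : V⦄, u ∈ S → v ∈ S → ∀ p : G.Walk u v, GPath G p → ∀ w ∈ p.support, w ∈ S

/-- `S` is `P₃`-convex: no vertex outside `S` has two neighbours in `S`. -/
def P3Convex (G : SimpleGraph V) (S : Set V) : Prop :=
  ∀ w ∉ S, ∀ a ∈ S, ∀ b ∈ S, G.Adj w a → G.Adj w b → a = b

/-- The triangle path interval of `S`. -/
def TInterval (G : SimpleGraph V) (S : Set V) : Set V :=
  S ∪ {w | ∃ u ∈ S, ∃ v ∈ S, ∃ p : G.Walk u v, TPath G p ∧ w ∈ p.support}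

/-- The monophonic interval of `S`. -/
def MInterval (G : SimpleGraph V) (S : Set V) : Set V :=
  S ∪ {w | ∃ u ∈ S, ∃ v ∈ S, ∃ p : G.Walk u v, MPath G p ∧ w ∈ p.support}

/-- The geodetic interval of `S`. -/
def GInterval (G : SimpleGraph V) (S : Set V) : Set V :=
  S ∪ {w | ∃ u ∈ S, ∃ v ∈ S, ∃ p : G.Walk u v, GPath G p ∧ w ∈ p.support}

/-- The `P₃`-interval of `S`: `S` together with the vertices having at least two
neighbours in `S`. -/
def P3Interval (G : SimpleGraph V) (S : Set V) : Set V :=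
  S ∪ {w | w ∉ S ∧ ∃ a ∈ S, ∃ b ∈ S, a ≠ b ∧ G.Adj w a ∧ G.Adj w b}

/-- The convex hull of `S` in the triangle path convexity. -/
def THull (G : SimpleGraph V) (S : Set V) : Set V :=
  ⋂₀ {C : Set V | S ⊆ C ∧ TConvex G C}

/-- The convex hull of `S` in the monophonic convexity. -/
def MHull (G : SimpleGraph V) (S : Set V) : Set V :=
  ⋂₀ {C : Set V | S ⊆ C ∧ MConvex G C}

/-- The convex hull of `S` in the geodetic convexity. -/
def GHull (G : SimpleGraph V) (S : Set V) : Set V :=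
  ⋂₀ {C : Set V | S ⊆ C ∧ GConvex G C}

/-- `K` separates the vertices `a` and `b`: both lie outside `K` and every walk
between them meets `K`. -/
def Separates (G : SimpleGraph V) (K : Set V) (a b : V) : Prop :=
  a ∉ K ∧ b ∉ K ∧ ∀ p : G.Walk a b, ∃ w ∈ p.support, w ∈ K

/-- `K` is a separator of `G`. -/
def IsSeparator (G : SimpleGraph V) (K : Set V) : Prop :=
  ∃ a b : V, Separates G K a b

/-- `G` is prime: it has no clique separator. -/
def IsPrime (G : SimpleGraph V) : Prop :=
  ¬ ∃ C : Set V, G.IsClique C ∧ IsSeparator G C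

/-- `K` is a minimal separator for `a` and `b`. -/
def IsMinSeparator (G : SimpleGraph V) (K : Set V) (a b : V) : Prop :=
  Separates G K a b ∧ ∀ K' : Set V, K' ⊂ K → ¬ Separates G K' a b

/-- `W` induces a maximal prime subgraph of `G`. -/
def IsMPSubgraph (G : SimpleGraph V) (W : Set V) : Prop :=
  IsPrime (G.induce W) ∧ ∀ W' : Set V, W ⊆ W' → IsPrime (G.induce W') → W' = W

/-- `C` is the vertex set of a connected component of `G - S`. -/
def IsCompOf (G : SimpleGraph V) (S C : Set V) : Prop :=
  C.Nonempty ∧ C ∩ S = ∅ ∧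
  (∀ x ∈ C, ∀ y ∈ C, ∃ p : G.Walk x y, ∀ w ∈ p.support, w ∈ C) ∧
  (∀ x ∈ C, ∀ y : V, y ∉ S → G.Adj x y → y ∈ C)


namespace StmtAux

variable {G : SimpleGraph V}

lemma walk_split {u v : V} (p : G.Walk u v) (i : ℕ) (hi : i < p.support.length) :
    ∃ (q : G.Walk u (p.support.get ⟨i, hi⟩)) (r : G.Walk (p.support.get ⟨i, hi⟩) v),
      q.length = i ∧ p.length = q.length + r.length ∧
      q.support = p.support.take (i + 1) ∧ r.support = p.support.drop i := by
  induction p generalizing i with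
  | nil =>
    simp only [SimpleGraph.Walk.support_nil, List.length_singleton] at hi
    match i with
    | 0 => exact ⟨SimpleGraph.Walk.nil, SimpleGraph.Walk.nil, rfl, rfl, rfl, rfl⟩
  | cons h p ih =>
    match i with
    | 0 => exact ⟨SimpleGraph.Walk.nil, SimpleGraph.Walk.cons h p, rfl, by simp, rfl, rfl⟩
    | (i + 1) =>
      obtain ⟨q, r, h1, h2, h3, h4⟩ := ih i (by simpa using Nat.lt_of_succ_lt_succ hi)
      exact ⟨SimpleGraph.Walk.cons h q, r, by simp [h1], by simp [h2]; omega,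
        by simp [h3], by simp [h4]⟩

lemma shortest_no_chord {u v : V} (p : G.Walk u v)
    (hshort : ∀ q : G.Walk u v, p.length ≤ q.length) :
    ∀ i j : ℕ, i + 1 < j →
      ∀ (hi : i < p.support.length) (hj : j < p.support.length),
        ¬ G.Adj (p.support.get ⟨i, hi⟩) (p.support.get ⟨j, hj⟩) := by
  intro i j hij hi hj hadj
  obtain ⟨q, _, hq1, _, _, _⟩ := walk_split p i hi
  obtain ⟨q', r', hq'1, hsum, _, _⟩ := walk_split p j hj
  have := hshort (q.append (SimpleGraph.Walk.cons hadj r'))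
  rw [SimpleGraph.Walk.length_append, SimpleGraph.Walk.length_cons] at this
  omega

lemma support_get_eq_getVert {u v : V} (p : G.Walk u v) (i : ℕ)
    (hi : i < p.support.length) : p.support.get ⟨i, hi⟩ = p.getVert i := by
  induction p generalizing i with
  | nil =>
    simp only [SimpleGraph.Walk.support_nil, List.length_singleton] at hi
    match i with
    | 0 => rfl
  | cons h p ih =>
    match i with
    | 0 => rfl
    | (i + 1) => exact ih i (by simpa using Nat.lt_of_succ_lt_succ hi)

lemma walk_segment {u v : V} (p : G.Walk u v) (s t : ℕ) (hst : s ≤ t) (ht : t ≤ p.length) :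
    ∃ q : G.Walk (p.getVert s) (p.getVert t),
      ∀ x ∈ q.support, ∃ m, s ≤ m ∧ m ≤ t ∧ x = p.getVert m := by
  induction t, hst using Nat.le_induction with
  | base => exact ⟨SimpleGraph.Walk.nil, by simp; exact ⟨s, le_rfl, le_rfl, rfl⟩⟩
  | succ t hst ih =>
    obtain ⟨q, hq⟩ := ih (le_trans (Nat.le_succ t) ht)
    refine ⟨q.concat (p.adj_getVert_succ (by omega)), ?_⟩
    intro x hx
    rw [SimpleGraph.Walk.support_concat, List.mem_append, List.mem_singleton] at hx
    rcases hx with hx | hx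
    · obtain ⟨m, h1, h2, h3⟩ := hq x hx
      exact ⟨m, h1, by omega, h3⟩
    · exact ⟨t + 1, by omega, le_rfl, by simpa using hx⟩

lemma extract {S : Set V} {u v : V} (hu : u ∈ S) (hv : v ∈ S) (p : G.Walk u v)
    (hp : TPath G p) (w : V) (hw : w ∈ p.support) (hwS : w ∉ S) :
    (∃ w ∉ S, ∃ a ∈ S, ∃ b ∈ S, a ≠ b ∧ G.Adj w a ∧ G.Adj w b) ∨
    (∃ a ∈ S, ∃ b ∈ S, a ≠ b ∧ ¬ G.Adj a b ∧ ∃ c, c ∉ S ∧ G.Adj a c ∧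
      ∃ d, d ∉ S ∧ G.Adj b d ∧ ∃ q : G.Walk c d, ∀ x ∈ q.support, x ∉ S) := by
  classical
  set n := p.length with hn
  have hlen : p.support.length = n + 1 := p.length_support
  have hnodup : p.support.Nodup := hp.1.support_nodup
  have hne : ∀ i j : ℕ, i < j → j ≤ n → p.getVert i ≠ p.getVert j := by
    intro i j hij hj heq
    have hi' : i < p.support.length := by omega
    have hj' : j < p.support.length := by omega
    rw [← support_get_eq_getVert p i hi', ← support_get_eq_getVert p j hj'] at heq
    have := (List.nodup_iff_injective_get.mp hnodup) heq
    simp only [Fin.mk.injEq] at this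
    omega
  have htp : ∀ i j : ℕ, i + 2 < j → j ≤ n → ¬ G.Adj (p.getVert i) (p.getVert j) := by
    intro i j hij hj
    have hi' : i < p.support.length := by omega
    have hj' : j < p.support.length := by omega
    have := hp.2 i j hij hi' hj'
    rwa [support_get_eq_getVert p i hi', support_get_eq_getVert p j hj'] at this
  have hadj : ∀ i : ℕ, i < n → G.Adj (p.getVert i) (p.getVert (i + 1)) := fun i hi => p.adj_getVert_succ hi
  have hf0 : p.getVert 0 = u := p.getVert_zero
  have hfn : p.getVert n = v := p.getVert_length
  -- find the index of w
  obtain ⟨⟨k, hk⟩, hgk⟩ := List.mem_iff_get.mp hw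
  rw [support_get_eq_getVert p k hk] at hgk
  have hkn : k ≤ n := by omega
  have hfkS : p.getVert k ∉ S := by rw [hgk]; exact hwS
  have hu0 : p.getVert 0 ∈ S := by rw [hf0]; exact hu
  have hvn : p.getVert n ∈ S := by rw [hfn]; exact hv
  have hk0 : k ≠ 0 := by rintro rfl; exact hfkS hu0
  have hkn' : k ≠ n := by rintro rfl; exact hfkS hvn
  -- largest index ≤ k in S
  have hIex : ∃ i, i < k ∧ p.getVert i ∈ S ∧ ∀ m, i < m → m ≤ k → p.getVert m ∉ S := by
    refine ⟨Nat.findGreatest (fun m => p.getVert m ∈ S) k, ?_, ?_, ?_⟩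
    · refine lt_of_le_of_ne (Nat.findGreatest_le (P := fun m => p.getVert m ∈ S) k) (fun hh => hfkS ?_)
      rw [← hh]
      exact Nat.findGreatest_spec (P := fun m => p.getVert m ∈ S) (Nat.zero_le k) hu0
    · exact Nat.findGreatest_spec (P := fun m => p.getVert m ∈ S) (Nat.zero_le k) hu0
    · exact fun m h1 h2 => Nat.findGreatest_is_greatest (P := fun m => p.getVert m ∈ S) h1 h2
  obtain ⟨i, hik', hiS, hgap1⟩ := hIex
  -- smallest index > k in S
  have hQex : ∃ m, k < m ∧ m ≤ n ∧ p.getVert m ∈ S := ⟨n, by omega, le_rfl, hvn⟩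
  have hJex : ∃ j, k < j ∧ j ≤ n ∧ p.getVert j ∈ S ∧
      ∀ m, k < m → m < j → p.getVert m ∉ S := by
    obtain ⟨h1, h2, h3⟩ := Nat.find_spec hQex
    exact ⟨Nat.find hQex, h1, h2, h3, fun m hm1 hm2 hmS =>
      Nat.find_min hQex hm2 ⟨hm1, by omega, hmS⟩⟩
  obtain ⟨j, hkj, hjn, hjS, hgap2⟩ := hJex
  have hgap : ∀ m, i < m → m < j → p.getVert m ∉ S := by
    intro m h1 h2
    rcases le_or_gt m k with h | h
    · exact hgap1 m h1 h
    · exact hgap2 m h h2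
  by_cases hj2 : j = i + 2
  · -- w has two neighbours in S
    left
    have hk1 : k = i + 1 := by omega
    have hin : i + 1 < n := by omega
    refine ⟨p.getVert k, hfkS, p.getVert i, hiS, p.getVert j, hjS, hne i j (by omega) hjn, ?_, ?_⟩
    · rw [hk1]; exact (hadj i (by omega)).symm
    · rw [hk1, hj2]; exact hadj (i + 1) (by omega)
  · right
    have hij3 : i + 3 ≤ j := by omega
    refine ⟨p.getVert i, hiS, p.getVert j, hjS, hne i j (by omega) hjn, htp i j (by omega) hjn,
      p.getVert (i + 1), hgap (i + 1) (by omega) (by omega), hadj i (by omega), ?_⟩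
    refine ⟨p.getVert (j - 1), hgap (j - 1) (by omega) (by omega), ?_, ?_⟩
    · have := hadj (j - 1) (by omega)
      have hjj : j - 1 + 1 = j := by omega
      rw [hjj] at this
      exact this.symm
    · obtain ⟨q, hq⟩ := walk_segment p (i + 1) (j - 1) (by omega) (by omega)
      refine ⟨q, ?_⟩
      intro x hx
      obtain ⟨m, h1, h2, h3⟩ := hq x hx
      exact h3 ▸ hgap m (by omega) (by omega)

end StmtAux

theorem stmt_17 [Fintype V] (G : SimpleGraph V) (S : Set V)
    (h : ¬ TConvex G S) :
    (∃ w ∉ S, ∃ a ∈ S, ∃ b ∈ S, a ≠ b ∧ G.Adj w a ∧ G.Adj w b) ∨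
    (∃ C : Set V, IsCompOf G S C ∧ ∃ u ∈ S, ∃ v ∈ S, u ≠ v ∧ ¬ G.Adj u v ∧
      (∃ u' ∈ C, G.Adj u u') ∧ (∃ v' ∈ C, G.Adj v v') ∧
      ∀ (hu : u ∈ C ∪ {u, v}) (hv : v ∈ C ∪ {u, v})
        (p : (G.induce (C ∪ {u, v})).Walk ⟨u, hu⟩ ⟨v, hv⟩),
        GPath (G.induce (C ∪ {u, v})) p →
          MPath G (p.map (SimpleGraph.Embedding.induce (C ∪ {u, v})).toHom) ∧
          ∀ w ∈ (p.map (SimpleGraph.Embedding.induce (C ∪ {u, v})).toHom).support,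
            w ≠ u → w ≠ v → w ∉ S) := by
  classical
  by_cases hP3 : ∃ w ∉ S, ∃ a ∈ S, ∃ b ∈ S, a ≠ b ∧ G.Adj w a ∧ G.Adj w b
  · exact Or.inl hP3
  right
  rw [TConvex] at h
  push_neg at h
  obtain ⟨u, v, hu, hv, p, hp, w, hw, hwS⟩ := h
  rcases StmtAux.extract hu hv p hp w hw hwS with hl |
    ⟨a, ha, b, hb, hab, hnadj, c, hcS, hac, d, hdS, hbd, q, hq⟩
  · exact absurd hl hP3
  set C : Set V := {x | x ∉ S ∧ ∃ r : G.Walk c x, ∀ y ∈ r.support, y ∉ S} with hC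
  have hcC : c ∈ C := ⟨hcS, SimpleGraph.Walk.nil, by
    intro y hy
    simp only [SimpleGraph.Walk.support_nil, List.mem_singleton] at hy
    exact hy ▸ hcS⟩
  have hdC : d ∈ C := ⟨hdS, q, hq⟩
  have hclose : ∀ x ∈ C, ∀ y : V, y ∉ S → G.Adj x y → y ∈ C := by
    rintro x ⟨hxS, r, hr⟩ y hyS hxy
    refine ⟨hyS, r.concat hxy, ?_⟩
    intro z hz
    rw [SimpleGraph.Walk.support_concat, List.mem_append,
      List.mem_singleton] at hz
    rcases hz with hz | rfl
    · exact hr z hz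
    · exact hyS
  have hconn : ∀ x ∈ C, ∀ y ∈ C, ∃ pth : G.Walk x y, ∀ z ∈ pth.support, z ∈ C := by
    rintro x ⟨hxS, rx, hrx⟩ y ⟨hyS, ry, hry⟩
    refine ⟨rx.reverse.append ry, ?_⟩
    intro z hz
    rw [SimpleGraph.Walk.mem_support_append_iff, SimpleGraph.Walk.support_reverse,
      List.mem_reverse] at hz
    rcases hz with hz | hz
    · exact ⟨hrx z hz, rx.takeUntil z hz,
        fun y' hy' => hrx y' (SimpleGraph.Walk.support_takeUntil_subset rx hz hy')⟩
    · exact ⟨hry z hz, ry.takeUntil z hz,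
        fun y' hy' => hry y' (SimpleGraph.Walk.support_takeUntil_subset ry hz hy')⟩
  refine ⟨C, ⟨⟨c, hcC⟩, Set.eq_empty_iff_forall_notMem.mpr (fun x hx => hx.1.1 hx.2),
    hconn, hclose⟩, a, ha, b, hb, hab, hnadj, ⟨c, hcC, hac⟩, ⟨d, hdC, hbd⟩, ?_⟩
  intro hu' hv' p0 hg
  have hmapsup : (p0.map (SimpleGraph.Embedding.induce (C ∪ {a, b})).toHom).support
      = p0.support.map Subtype.val := by
    rw [SimpleGraph.Walk.support_map]
    rfl
  constructor
  · constructor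
    · exact SimpleGraph.Walk.map_isPath_of_injective
        (SimpleGraph.Embedding.induce (G := G) (C ∪ {a, b})).injective hg.1
    · intro i j hij hi hj hadj'
      rw [hmapsup] at hi hj
      have hi' : i < p0.support.length := by simpa using hi
      have hj' : j < p0.support.length := by simpa using hj
      have hx : (p0.map (SimpleGraph.Embedding.induce (C ∪ {a, b})).toHom).support.get
          ⟨i, by rw [hmapsup]; simpa using hi'⟩ = (p0.support.get ⟨i, hi'⟩ : V) := by
        simp [hmapsup, List.get_eq_getElem]
        exact (List.getElem_of_eq hmapsup _).trans (List.getElem_map ..)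
      have hy : (p0.map (SimpleGraph.Embedding.induce (C ∪ {a, b})).toHom).support.get
          ⟨j, by rw [hmapsup]; simpa using hj'⟩ = (p0.support.get ⟨j, hj'⟩ : V) := by
        simp [hmapsup, List.get_eq_getElem]
        exact (List.getElem_of_eq hmapsup _).trans (List.getElem_map ..)
      rw [hx, hy] at hadj'
      exact StmtAux.shortest_no_chord p0 hg.2 i j (by omega) hi' hj' hadj'
  · intro w' hw' hwa hwb
    rw [hmapsup, List.mem_map] at hw'
    obtain ⟨x, _, rfl⟩ := hw'
    have hx2 := x.2
    rcases hx2 with hx2 | hx2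
    · exact hx2.1
    · rcases hx2 with hx2 | hx2
      · exact absurd hx2 hwa
      · exact absurd hx2 hwb
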